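/- arXiv:0704.1308 — 3 statements merged into one kernel-verified Lean document; each statement's English description precedes it below -/
import Mathlib

section
/- Let X ~ Gamma(M,1) and let X_beta be an independent Beta(M-N+1, N-1) random variable. Then X_beta * X ~ Gamma(M-N+1, 1). -/
open MeasureTheory ProbabilityTheory

/-- The Beta distribution on `[0,1]` with parameters `a`, `b`. -/
noncomputable def betaMeasure (a b : ℝ) : Measure ℝ :=
  (volume.restrict (Set.Ioo (0:ℝ) 1)).withDensity
    (fun x => ENNReal.ofReal (Real.Gamma (a + b) / (Real.Gamma a * Real.Gamma b) *
      x ^ (a - 1) * (1 - x) ^ (b - 1)))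

open Real Set
open scoped ENNReal

namespace BetaGammaAux

/-- One-dimensional change of variables for Lebesgue integrals. -/
lemma lintegral_image_1d {s : Set ℝ} {f f' : ℝ → ℝ}
    (hs : MeasurableSet s) (hf' : ∀ x ∈ s, HasDerivWithinAt f (f' x) s x)
    (hf : Set.InjOn f s) (g : ℝ → ℝ≥0∞) :
    ∫⁻ x in f '' s, g x = ∫⁻ x in s, ENNReal.ofReal |f' x| * g (f x) := by
  simpa only [ContinuousLinearMap.det_toSpanSingleton] using
    lintegral_image_eq_lintegral_abs_det_fderiv_mul volume hs
      (fun x hx => (hf' x hx).hasFDerivWithinAt) hf g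

/-- Scaling a Gamma(c,1) variable by `t` gives a Gamma(c, t⁻¹) variable. -/
lemma map_mul_left_gamma {c t : ℝ} (ht : 0 < t) :
    Measure.map (fun x => t * x) (gammaMeasure c 1) = gammaMeasure c t⁻¹ := by
  have ht' : (0:ℝ) < t⁻¹ := inv_pos.mpr ht
  ext s hs
  rw [Measure.map_apply (measurable_const_mul t) hs, gammaMeasure, gammaMeasure,
    withDensity_apply _ (hs.preimage (measurable_const_mul t)), withDensity_apply _ hs]
  have himg : (fun x => t * x) ⁻¹' s = (fun y => t⁻¹ * y) '' s := by
    ext x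
    constructor
    · intro hx
      exact ⟨t * x, hx, by field_simp⟩
    · rintro ⟨y, hy, rfl⟩
      simpa [Set.mem_preimage, ← mul_assoc, mul_inv_cancel₀ ht.ne'] using hy
  have hderiv : ∀ y ∈ s, HasDerivWithinAt (fun y => t⁻¹ * y) t⁻¹ s y := by
    intro y _
    simpa using ((hasDerivAt_id y).const_mul t⁻¹).hasDerivWithinAt
  have hinj : Set.InjOn (fun y => t⁻¹ * y) s := fun x _ y _ h => by
    have := mul_left_cancel₀ ht'.ne' h
    exact this
  rw [himg, lintegral_image_1d hs hderiv hinj]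
  refine setLIntegral_congr_fun hs (fun y _ => ?_)
  rcases le_or_gt 0 y with hy | hy
  · rw [gammaPDF_of_nonneg (by positivity : (0:ℝ) ≤ t⁻¹ * y), gammaPDF_of_nonneg hy,
      ← ENNReal.ofReal_mul (abs_nonneg _)]
    congr 1
    rw [abs_of_pos ht', one_rpow, mul_rpow ht'.le hy, one_mul]
    have h1 : t⁻¹ ^ c = t⁻¹ * t⁻¹ ^ (c - 1) := by
      have h2 := Real.rpow_add ht' 1 (c - 1)
      rw [Real.rpow_one] at h2
      rw [show (1:ℝ) + (c - 1) = c by ring] at h2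
      exact h2
    rw [h1]
    ring
  · rw [gammaPDF_of_neg (by nlinarith : t⁻¹ * y < 0), gammaPDF_of_neg hy, mul_zero]

/-- `∫_0^∞ u^(b-1) e^(-yu) du = Γ(b)/y^b`. -/
lemma lintegral_rpow_exp {b y : ℝ} (hb : 0 < b) (hy : 0 < y) :
    ∫⁻ u in Ioi (0:ℝ), ENNReal.ofReal (u ^ (b - 1) * Real.exp (-(y * u))) =
      ENNReal.ofReal (Real.Gamma b / y ^ b) := by
  have h1 := lintegral_gammaPDF_eq_one hb hy
  have hIio : ∫⁻ x in Iio (0:ℝ), gammaPDF b y x = 0 := by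
    rw [setLIntegral_congr_fun measurableSet_Iio
      (fun x (hx : x < 0) => gammaPDF_of_neg hx), lintegral_zero]
  have hsplit : (∫⁻ x in Ici (0:ℝ), gammaPDF b y x) = 1 := by
    rw [← lintegral_add_compl (gammaPDF b y) (measurableSet_Ici (a := (0:ℝ))), compl_Ici, hIio, add_zero] at h1
    exact h1
  rw [← setLIntegral_congr Ioi_ae_eq_Ici] at hsplit
  have hc : (0:ℝ) < y ^ b / Real.Gamma b := by
    have := Real.Gamma_pos_of_pos hb
    positivity
  have heq : ∫⁻ x in Ioi (0:ℝ), gammaPDF b y x =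
      ENNReal.ofReal (y ^ b / Real.Gamma b) *
        ∫⁻ u in Ioi (0:ℝ), ENNReal.ofReal (u ^ (b - 1) * Real.exp (-(y * u))) := by
    rw [← lintegral_const_mul' _ _ ENNReal.ofReal_ne_top]
    refine setLIntegral_congr_fun measurableSet_Ioi (fun x hx => ?_)
    rw [gammaPDF_of_nonneg (le_of_lt hx), ← ENNReal.ofReal_mul hc.le]
    congr 1
    ring
  rw [heq] at hsplit
  have hne : ENNReal.ofReal (y ^ b / Real.Gamma b) ≠ 0 := by
    simp [ENNReal.ofReal_eq_zero, not_le, hc]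
  calc ∫⁻ u in Ioi (0:ℝ), ENNReal.ofReal (u ^ (b - 1) * Real.exp (-(y * u)))
      = (ENNReal.ofReal (y ^ b / Real.Gamma b))⁻¹ *
          (ENNReal.ofReal (y ^ b / Real.Gamma b) *
            ∫⁻ u in Ioi (0:ℝ), ENNReal.ofReal (u ^ (b - 1) * Real.exp (-(y * u)))) := by
        rw [← mul_assoc, ENNReal.inv_mul_cancel hne ENNReal.ofReal_ne_top, one_mul]
    _ = (ENNReal.ofReal (y ^ b / Real.Gamma b))⁻¹ := by rw [hsplit, mul_one]
    _ = ENNReal.ofReal (Real.Gamma b / y ^ b) := by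
        rw [← ENNReal.ofReal_inv_of_pos hc, inv_div]

/-- The key integral identity. -/
lemma key_lintegral {a b y : ℝ} (ha : 0 < a) (hb : 0 < b) (hy : 0 < y) :
    (∫⁻ t in Ioo (0:ℝ) 1,
      ENNReal.ofReal (Real.Gamma (a + b) / (Real.Gamma a * Real.Gamma b) *
        t ^ (a - 1) * (1 - t) ^ (b - 1)) * gammaPDF (a + b) t⁻¹ y) = gammaPDF a 1 y := by
  have hab : (0:ℝ) < a + b := by linarith
  have hGa := Real.Gamma_pos_of_pos ha
  have hGb := Real.Gamma_pos_of_pos hb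
  have hGab := Real.Gamma_pos_of_pos hab
  have himg : (fun u : ℝ => (1 + u)⁻¹) '' Ioi 0 = Ioo (0:ℝ) 1 := by
    ext t
    constructor
    · rintro ⟨u, hu, rfl⟩
      have hu' : (0:ℝ) < u := hu
      constructor
      · positivity
      · rw [inv_lt_one_iff₀]
        right
        linarith
    · rintro ⟨ht0, ht1⟩
      refine ⟨t⁻¹ - 1, ?_, ?_⟩
      · have h1 : (1:ℝ) < t⁻¹ := (one_lt_inv₀ ht0).mpr ht1
        simpa [mem_Ioi] using sub_pos.mpr h1
      · have : t ≠ 0 := ne_of_gt ht0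
        field_simp
        ring
  have hderiv : ∀ u ∈ Ioi (0:ℝ),
      HasDerivWithinAt (fun u : ℝ => (1 + u)⁻¹) (-(((1 + u) ^ 2)⁻¹)) (Ioi 0) u := by
    intro u hu
    have hu' : (0:ℝ) < u := hu
    have h1u : (1:ℝ) + u ≠ 0 := by positivity
    have h := ((hasDerivAt_id u).const_add 1).inv h1u
    convert h.hasDerivWithinAt using 1
    · rfl
    · rfl
    · rfl
    · simp [neg_div]
  have hinj : Set.InjOn (fun u : ℝ => (1 + u)⁻¹) (Ioi 0) := by
    intro x _ y' _ h
    have := inv_injective h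
    linarith [this]
  rw [← himg, lintegral_image_1d measurableSet_Ioi hderiv hinj]
  have hcongr : ∀ u ∈ Ioi (0:ℝ),
      ENNReal.ofReal |(-(((1 + u) ^ 2)⁻¹))| *
        (ENNReal.ofReal (Real.Gamma (a + b) / (Real.Gamma a * Real.Gamma b) *
          ((1 + u)⁻¹) ^ (a - 1) * (1 - (1 + u)⁻¹) ^ (b - 1)) *
          gammaPDF (a + b) ((1 + u)⁻¹)⁻¹ y)
      = ENNReal.ofReal (y ^ (a + b - 1) * Real.exp (-y) / (Real.Gamma a * Real.Gamma b)) *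
          ENNReal.ofReal (u ^ (b - 1) * Real.exp (-(y * u))) := by
    intro u hu
    have hu' : (0:ℝ) < u := hu
    have hw : (0:ℝ) < 1 + u := by linarith
    have hsub : (1:ℝ) - (1 + u)⁻¹ = u * (1 + u)⁻¹ := by
      field_simp
      ring
    rw [inv_inv, gammaPDF_of_nonneg hy.le, abs_neg,
      abs_of_pos (by positivity : (0:ℝ) < ((1 + u) ^ 2)⁻¹), hsub]
    rw [← ENNReal.ofReal_mul (by positivity), ← ENNReal.ofReal_mul (by positivity),
      ← ENNReal.ofReal_mul (by positivity)]
    congr 1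
    rw [mul_rpow hu'.le (by positivity : (0:ℝ) ≤ (1 + u)⁻¹),
      Real.inv_rpow hw.le, Real.inv_rpow hw.le,
      show -((1 + u) * y) = -y + -(y * u) by ring, Real.exp_add]
    have hpow : (1 + u) ^ (a + b) = ((1 + u) ^ 2 : ℝ) * ((1 + u) ^ (a - 1) * (1 + u) ^ (b - 1)) := by
      rw [← Real.rpow_natCast (1 + u) 2, ← Real.rpow_add hw, ← Real.rpow_add hw]
      congr 1
      push_cast
      ring
    rw [hpow]
    have h2 : ((1 + u) ^ 2 : ℝ) ≠ 0 := by positivity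
    have h3 : ((1 + u) ^ (a - 1) : ℝ) ≠ 0 := (Real.rpow_pos_of_pos hw _).ne'
    have h4 : ((1 + u) ^ (b - 1) : ℝ) ≠ 0 := (Real.rpow_pos_of_pos hw _).ne'
    field_simp
  rw [setLIntegral_congr_fun measurableSet_Ioi hcongr,
    lintegral_const_mul' _ _ ENNReal.ofReal_ne_top, lintegral_rpow_exp hb hy,
    ← ENNReal.ofReal_mul (by positivity), gammaPDF_of_nonneg hy.le]
  congr 1
  rw [one_rpow, show -(1 * y) = -y by ring]
  have hy2 : y ^ (a + b - 1) = y ^ (a - 1) * y ^ b := by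
    rw [← Real.rpow_add hy]
    congr 1
    ring
  rw [hy2]
  have h5 : (y ^ b : ℝ) ≠ 0 := (Real.rpow_pos_of_pos hy _).ne'
  field_simp

end BetaGammaAux

open BetaGammaAux in
/-- The main computation. -/
lemma beta_mul_gamma_calc {a b : ℝ} (ha : 0 < a) (hb : 0 < b) :
    Measure.map (fun p : ℝ × ℝ => p.1 * p.2)
      ((_root_.betaMeasure a b).prod (gammaMeasure (a + b) 1)) = gammaMeasure a 1 := by
  have hab : 0 < a + b := by linarith
  have : IsProbabilityMeasure (gammaMeasure (a + b) 1) := isProbabilityMeasure_gammaMeasure hab one_pos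
  have hGa := Real.Gamma_pos_of_pos ha
  have hGb := Real.Gamma_pos_of_pos hb
  have hfmeas : Measurable (fun x : ℝ => ENNReal.ofReal
      (Real.Gamma (a + b) / (Real.Gamma a * Real.Gamma b) *
        x ^ (a - 1) * (1 - x) ^ (b - 1))) := by fun_prop
  have hpdf : Measurable (fun p : ℝ × ℝ => gammaPDF (a + b) p.1⁻¹ p.2) := by
    apply ENNReal.measurable_ofReal.comp
    unfold gammaPDFReal
    refine Measurable.ite ?_ ?_ measurable_const
    · exact measurableSet_le measurable_const measurable_snd
    · fun_prop
  ext s hs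
  rw [Measure.map_apply measurable_mul hs, Measure.prod_apply (measurable_mul hs)]
  have hg : Measurable (fun t : ℝ => gammaMeasure (a + b) 1
      (Prod.mk t ⁻¹' ((fun p : ℝ × ℝ => p.1 * p.2) ⁻¹' s))) :=
    measurable_measure_prodMk_left (measurable_mul hs)
  rw [_root_.betaMeasure, lintegral_withDensity_eq_lintegral_mul _ hfmeas hg]
  have h1 : ∀ t ∈ Ioo (0:ℝ) 1,
      ((fun x : ℝ => ENNReal.ofReal (Real.Gamma (a + b) / (Real.Gamma a * Real.Gamma b) *
          x ^ (a - 1) * (1 - x) ^ (b - 1))) * (fun t : ℝ => gammaMeasure (a + b) 1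
          (Prod.mk t ⁻¹' ((fun p : ℝ × ℝ => p.1 * p.2) ⁻¹' s)))) t
        = ∫⁻ y in s, ENNReal.ofReal (Real.Gamma (a + b) / (Real.Gamma a * Real.Gamma b) *
            t ^ (a - 1) * (1 - t) ^ (b - 1)) * gammaPDF (a + b) t⁻¹ y := by
    intro t ht
    have hsec : (Prod.mk t ⁻¹' ((fun p : ℝ × ℝ => p.1 * p.2) ⁻¹' s))
        = (fun x : ℝ => t * x) ⁻¹' s := rfl
    simp only [Pi.mul_apply, hsec]
    rw [← Measure.map_apply (measurable_const_mul t) hs, map_mul_left_gamma ht.1,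
      gammaMeasure, withDensity_apply _ hs,
      ← lintegral_const_mul' _ _ ENNReal.ofReal_ne_top]
  rw [setLIntegral_congr_fun measurableSet_Ioo h1]
  rw [lintegral_lintegral_swap (((hfmeas.comp measurable_fst).mul hpdf).aemeasurable)]
  have hae : ∀ᵐ y ∂(volume.restrict s),
      (∫⁻ t in Ioo (0:ℝ) 1, ENNReal.ofReal (Real.Gamma (a + b) /
          (Real.Gamma a * Real.Gamma b) * t ^ (a - 1) * (1 - t) ^ (b - 1)) *
          gammaPDF (a + b) t⁻¹ y) = gammaPDF a 1 y := by
    refine ae_restrict_of_ae ?_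
    have h0 : ∀ᵐ (y : ℝ) ∂volume, y ≠ 0 := by
      rw [ae_iff]
      have : {y : ℝ | ¬ y ≠ 0} = {0} := by ext; simp
      rw [this]
      exact measure_singleton 0
    filter_upwards [h0] with y hy0
    rcases hy0.lt_or_gt with hneg | hpos
    · simp [gammaPDF_of_neg hneg]
    · exact key_lintegral ha hb hpos
  rw [lintegral_congr_ae hae, gammaMeasure, withDensity_apply _ hs]

/-- Beta-gamma algebra: if `X ~ Gamma(M, 1)` and `X_beta` is an independent
Beta(M-N+1, N-1) random variable, then `X_beta * X ~ Gamma(M-N+1, 1)`. -/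
theorem beta_mul_gamma
    {Ω : Type*} [MeasurableSpace Ω] (μ : Measure Ω) [IsProbabilityMeasure μ]
    (M N : ℕ) (hN : 1 < N) (hNM : N < M)
    (X Xb : Ω → ℝ) (hX : Measurable X) (hXb : Measurable Xb)
    (hXlaw : Measure.map X μ = gammaMeasure (M : ℝ) 1)
    (hXblaw : Measure.map Xb μ = _root_.betaMeasure ((M : ℝ) - N + 1) ((N : ℝ) - 1))
    (hindep : IndepFun Xb X μ) :
    Measure.map (fun ω => Xb ω * X ω) μ = gammaMeasure ((M : ℝ) - N + 1) 1 := by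
  have hN' : (1:ℝ) < N := by exact_mod_cast hN
  have hNM' : (N:ℝ) < M := by exact_mod_cast hNM
  have ha : (0:ℝ) < (M : ℝ) - N + 1 := by linarith
  have hb : (0:ℝ) < (N : ℝ) - 1 := by linarith
  have hjoint := (indepFun_iff_map_prod_eq_prod_map_map hXb.aemeasurable hX.aemeasurable).mp hindep
  rw [hXblaw, hXlaw] at hjoint
  have hM2 : gammaMeasure ((M:ℝ)) 1 =
      gammaMeasure (((M:ℝ) - N + 1) + ((N:ℝ) - 1)) 1 := by
    congr 1
    ring
  have hcomp : (fun ω => Xb ω * X ω) =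
      (fun p : ℝ × ℝ => p.1 * p.2) ∘ (fun ω => (Xb ω, X ω)) := rfl
  rw [hcomp, ← Measure.map_map measurable_mul (hXb.prodMk hX), hjoint, hM2]
  exact beta_mul_gamma_calc ha hb
end

section
/- Let h_eff be a random unit vector in C^M and let v be a unit vector that is isotropically distributed in the (M-1)-dimensional orthogonal complement of an independent quantization vector h_hat, where theta = angle(h_eff, h_hat). Then E[|h_eff^H v|^2] = E[sin^2(theta)] / (M-1). -/
open MeasureTheory ProbabilityTheory Matrix

noncomputable instance matrixMeasurableSpace (m n : Type*) : MeasurableSpace (Matrix m n ℂ) :=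
  MeasurableSpace.pi

open scoped ComplexConjugate

section Helpers

lemma herm_idem_trace_zero' {N : ℕ} (Q : Matrix (Fin N) (Fin N) ℂ)
    (hherm : Qᴴ = Q) (hidem : Q * Q = Q) (htr : Q.trace = 0) : Q = 0 := by
  have hQ : Qᴴ * Q = Q := by rw [hherm, hidem]
  have htr2 : (Qᴴ * Q).trace = 0 := by rw [hQ, htr]
  have hreal : ∑ j, ∑ i, Complex.normSq (Q i j) = 0 := by
    have : (Qᴴ * Q).trace = ((∑ j, ∑ i, Complex.normSq (Q i j) : ℝ) : ℂ) := by
      simp only [Matrix.trace, Matrix.diag, Matrix.mul_apply, Matrix.conjTranspose_apply]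
      push_cast
      refine Finset.sum_congr rfl fun j _ => Finset.sum_congr rfl fun i _ => ?_
      rw [RCLike.star_def, ← Complex.normSq_eq_conj_mul_self]
    rw [this] at htr2
    exact_mod_cast htr2
  have h0 : ∀ j ∈ Finset.univ, ∀ i ∈ (Finset.univ : Finset (Fin N)), Complex.normSq (Q i j) = 0 := by
    have h1 := (Finset.sum_eq_zero_iff_of_nonneg (fun j _ => Finset.sum_nonneg
      (fun i _ => Complex.normSq_nonneg _))).1 hreal
    intro j hj i hi
    exact (Finset.sum_eq_zero_iff_of_nonneg (fun i _ => Complex.normSq_nonneg _)).1 (h1 j hj) i hi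
  ext i j
  simpa using Complex.normSq_eq_zero.1 (h0 j (Finset.mem_univ _) i (Finset.mem_univ _))

lemma proj_complement' {M n : ℕ} (hMn : M = n + 1)
    (T : Matrix (Fin M) (Fin n) ℂ) (h : Fin M → ℂ)
    (hT : Tᴴ * T = 1) (hperp : Tᴴ *ᵥ h = 0)
    (hunit : ∑ i, Complex.normSq (h i) = 1) :
    T * Tᴴ + vecMulVec h (star h) = 1 := by
  set P := T * Tᴴ with hP
  set H := vecMulVec h (star h) with hHdef
  have hh : ∑ i, conj (h i) * h i = (1 : ℂ) := by
    have : ∑ i, ((Complex.normSq (h i) : ℂ)) = 1 := by exact_mod_cast congrArg (Complex.ofReal ·) hunit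
    simpa [Complex.normSq_eq_conj_mul_self] using this
  have PP : P * P = P := by
    rw [hP, Matrix.mul_assoc, ← Matrix.mul_assoc Tᴴ, hT, Matrix.one_mul]
  have HH : H * H = H := by
    ext i k
    simp only [hHdef, Matrix.mul_apply, vecMulVec_apply, Pi.star_apply, RCLike.star_def]
    calc ∑ m, h i * conj (h m) * (h m * conj (h k))
        = (h i * conj (h k)) * ∑ m, conj (h m) * h m := by
          rw [Finset.mul_sum]; exact Finset.sum_congr rfl fun m _ => by ring
      _ = h i * conj (h k) := by rw [hh, mul_one]
  have PH : P * H = 0 := by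
    have h1 : Tᴴ * H = 0 := by
      ext j k
      simp only [hHdef, Matrix.mul_apply, vecMulVec_apply, Pi.star_apply, RCLike.star_def,
        Matrix.zero_apply]
      have : ∑ m, Tᴴ j m * (h m * conj (h k)) = (∑ m, Tᴴ j m * h m) * conj (h k) := by
        rw [Finset.sum_mul]; exact Finset.sum_congr rfl fun m _ => by ring
      rw [this]
      have := congrFun hperp j
      simp only [Matrix.mulVec, dotProduct, Pi.zero_apply] at this
      rw [this, zero_mul]
    rw [hP, Matrix.mul_assoc, h1, Matrix.mul_zero]
  have Hherm : Hᴴ = H := by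
    ext i k
    simp [hHdef, Matrix.conjTranspose_apply, vecMulVec_apply, mul_comm]
  have Pherm : Pᴴ = P := by rw [hP, Matrix.conjTranspose_mul, Matrix.conjTranspose_conjTranspose]
  have HP : H * P = 0 := by
    have : (P * H)ᴴ = 0 := by rw [PH, Matrix.conjTranspose_zero]
    rwa [Matrix.conjTranspose_mul, Hherm, Pherm] at this
  set S := P + H with hS
  have SS : S * S = S := by
    rw [hS, add_mul, mul_add, mul_add, PP, HH, PH, HP]; abel
  set Q := 1 - S with hQ
  have Qherm : Qᴴ = Q := by
    rw [hQ, Matrix.conjTranspose_sub, Matrix.conjTranspose_one, hS, Matrix.conjTranspose_add,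
      Pherm, Hherm]
  have Qidem : Q * Q = Q := by
    have e : (1 - S) * (1 - S) = 1 - S - S + S * S := by noncomm_ring
    rw [hQ, e, SS]; abel
  have htrP : P.trace = (n : ℂ) := by
    rw [hP, Matrix.trace_mul_comm, hT, Matrix.trace_one]; simp
  have htrH : H.trace = 1 := by
    simp only [hHdef, Matrix.trace, Matrix.diag, vecMulVec_apply, Pi.star_apply, RCLike.star_def]
    rw [← hh]
    exact Finset.sum_congr rfl fun i _ => mul_comm _ _
  have htrQ : Q.trace = 0 := by
    rw [hQ, Matrix.trace_sub, Matrix.trace_one, hS, Matrix.trace_add, htrP, htrH]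
    simp only [Fintype.card_fin, hMn]
    push_cast; ring
  have := herm_idem_trace_zero' Q Qherm Qidem htrQ
  rw [hQ, sub_eq_zero] at this
  rw [hS] at this
  exact this.symm

lemma scalar_identity' {M n : ℕ} (hMn : M = n + 1)
    (T : Matrix (Fin M) (Fin n) ℂ) (h : Fin M → ℂ)
    (hT : Tᴴ * T = 1) (hperp : Tᴴ *ᵥ h = 0)
    (hunit : ∑ i, Complex.normSq (h i) = 1)
    (x : Fin M → ℂ) (hx : ∑ i, Complex.normSq (x i) = 1) :
    (∑ j, ((Complex.normSq (∑ i, conj (x i) * T i j) : ℝ) : ℂ)) =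
      1 - ((Complex.normSq (∑ i, conj (x i) * h i) : ℝ) : ℂ) := by
  have key : ∀ i i', ∑ j, T i j * conj (T i' j)
      = (if i = i' then (1:ℂ) else 0) - h i * conj (h i') := by
    intro i i'
    have := congrFun (congrFun (proj_complement' hMn T h hT hperp hunit) i) i'
    simp only [Matrix.add_apply, Matrix.mul_apply, Matrix.conjTranspose_apply,
      vecMulVec_apply, Pi.star_apply, RCLike.star_def, Matrix.one_apply] at this
    linear_combination this
  set c : Fin M → ℂ := fun i => conj (x i) with hc
  have hcx : ∑ i, c i * conj (c i) = 1 := by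
    have : ∑ i, ((Complex.normSq (x i) : ℂ)) = 1 := by exact_mod_cast congrArg (Complex.ofReal ·) hx
    rw [← this]
    refine Finset.sum_congr rfl fun i _ => ?_
    rw [hc]; simp [Complex.normSq_eq_conj_mul_self]
  calc ∑ j, ((Complex.normSq (∑ i, c i * T i j) : ℝ) : ℂ)
      = ∑ j, (∑ i, c i * T i j) * conj (∑ i', c i' * T i' j) := by
        refine Finset.sum_congr rfl fun j _ => ?_
        rw [Complex.mul_conj]
    _ = ∑ j, ∑ i, ∑ i', (c i * T i j) * (conj (c i') * conj (T i' j)) := by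
        refine Finset.sum_congr rfl fun j _ => ?_
        rw [map_sum, Finset.sum_mul_sum]
        exact Finset.sum_congr rfl fun i _ => Finset.sum_congr rfl fun i' _ => by
          rw [_root_.map_mul]
    _ = ∑ i, ∑ i', (c i * conj (c i')) * ∑ j, T i j * conj (T i' j) := by
        rw [Finset.sum_comm]
        refine Finset.sum_congr rfl fun i _ => ?_
        rw [Finset.sum_comm]
        refine Finset.sum_congr rfl fun i' _ => ?_
        rw [Finset.mul_sum]
        exact Finset.sum_congr rfl fun j _ => by ring
    _ = ∑ i, ∑ i', ((c i * conj (c i')) * (if i = i' then (1:ℂ) else 0)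
          - (c i * h i) * conj (c i' * h i')) := by
        refine Finset.sum_congr rfl fun i _ => Finset.sum_congr rfl fun i' _ => ?_
        rw [key i i', mul_sub, _root_.map_mul]
        ring_nf
    _ = 1 - ((Complex.normSq (∑ i, c i * h i) : ℝ) : ℂ) := by
        simp only [Finset.sum_sub_distrib]
        congr 1
        · conv_rhs => rw [← hcx]
          refine Finset.sum_congr rfl fun i _ => ?_
          simp only [mul_ite, mul_one, mul_zero, Finset.sum_ite_eq, Finset.mem_univ, if_true]
        · rw [← Complex.mul_conj, map_sum, ← Finset.sum_mul_sum]

variable {Ω : Type*} [MeasurableSpace Ω] {μ : MeasureTheory.Measure Ω} {n : ℕ}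

lemma integrable_of_bdd' [IsFiniteMeasure μ] {E : Type*} [NormedAddCommGroup E]
    [MeasurableSpace E] [BorelSpace E] [SecondCountableTopology E] {f : Ω → E} {C : ℝ}
    (hf : Measurable f) (h : ∀ ω, ‖f ω‖ ≤ C) :
    Integrable f μ :=
  ⟨hf.aestronglyMeasurable, HasFiniteIntegral.of_bounded (ae_of_all _ h)⟩

lemma indep_integral_mul_complex' [IsProbabilityMeasure μ] {X Y : Ω → ℂ}
    (h : IndepFun X Y μ) (hX : Measurable X) (hY : Measurable Y) {CX CY : ℝ}
    (hbX : ∀ ω, ‖X ω‖ ≤ CX) (hbY : ∀ ω, ‖Y ω‖ ≤ CY)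
    (hCX : 0 ≤ CX) (hCY : 0 ≤ CY) :
    ∫ ω, X ω * Y ω ∂μ = (∫ ω, X ω ∂μ) * ∫ ω, Y ω ∂μ := by
  have mXre : Measurable fun ω => (X ω).re := Complex.measurable_re.comp hX
  have mXim : Measurable fun ω => (X ω).im := Complex.measurable_im.comp hX
  have mYre : Measurable fun ω => (Y ω).re := Complex.measurable_re.comp hY
  have mYim : Measurable fun ω => (Y ω).im := Complex.measurable_im.comp hY
  have bXre : ∀ ω, ‖(X ω).re‖ ≤ CX := fun ω =>
    le_trans (by rw [Real.norm_eq_abs]; exact Complex.abs_re_le_norm _) (hbX ω)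
  have bXim : ∀ ω, ‖(X ω).im‖ ≤ CX := fun ω =>
    le_trans (by rw [Real.norm_eq_abs]; exact Complex.abs_im_le_norm _) (hbX ω)
  have bYre : ∀ ω, ‖(Y ω).re‖ ≤ CY := fun ω =>
    le_trans (by rw [Real.norm_eq_abs]; exact Complex.abs_re_le_norm _) (hbY ω)
  have bYim : ∀ ω, ‖(Y ω).im‖ ≤ CY := fun ω =>
    le_trans (by rw [Real.norm_eq_abs]; exact Complex.abs_im_le_norm _) (hbY ω)
  have iXre : Integrable (fun ω => (X ω).re) μ := integrable_of_bdd' mXre bXre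
  have iXim : Integrable (fun ω => (X ω).im) μ := integrable_of_bdd' mXim bXim
  have iYre : Integrable (fun ω => (Y ω).re) μ := integrable_of_bdd' mYre bYre
  have iYim : Integrable (fun ω => (Y ω).im) μ := integrable_of_bdd' mYim bYim
  have iX : Integrable X μ := integrable_of_bdd' hX hbX
  have iY : Integrable Y μ := integrable_of_bdd' hY hbY
  have iXY : Integrable (fun ω => X ω * Y ω) μ := by
    refine integrable_of_bdd' (C := CX * CY) (hX.mul hY) fun ω => ?_
    rw [norm_mul]
    exact mul_le_mul (hbX ω) (hbY ω) (norm_nonneg _) hCX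
  have hrr : IndepFun (fun ω => (X ω).re) (fun ω => (Y ω).re) μ :=
    h.comp Complex.measurable_re Complex.measurable_re
  have hri : IndepFun (fun ω => (X ω).re) (fun ω => (Y ω).im) μ :=
    h.comp Complex.measurable_re Complex.measurable_im
  have hir : IndepFun (fun ω => (X ω).im) (fun ω => (Y ω).re) μ :=
    h.comp Complex.measurable_im Complex.measurable_re
  have hii : IndepFun (fun ω => (X ω).im) (fun ω => (Y ω).im) μ :=
    h.comp Complex.measurable_im Complex.measurable_im
  have err : ∫ ω, (X ω).re * (Y ω).re ∂μ = (∫ ω, (X ω).re ∂μ) * ∫ ω, (Y ω).re ∂μ :=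
    hrr.integral_fun_mul_eq_mul_integral iXre.aestronglyMeasurable iYre.aestronglyMeasurable
  have eri : ∫ ω, (X ω).re * (Y ω).im ∂μ = (∫ ω, (X ω).re ∂μ) * ∫ ω, (Y ω).im ∂μ :=
    hri.integral_fun_mul_eq_mul_integral iXre.aestronglyMeasurable iYim.aestronglyMeasurable
  have eir : ∫ ω, (X ω).im * (Y ω).re ∂μ = (∫ ω, (X ω).im ∂μ) * ∫ ω, (Y ω).re ∂μ :=
    hir.integral_fun_mul_eq_mul_integral iXim.aestronglyMeasurable iYre.aestronglyMeasurable
  have eii : ∫ ω, (X ω).im * (Y ω).im ∂μ = (∫ ω, (X ω).im ∂μ) * ∫ ω, (Y ω).im ∂μ :=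
    hii.integral_fun_mul_eq_mul_integral iXim.aestronglyMeasurable iYim.aestronglyMeasurable
  have reX : (∫ ω, X ω ∂μ).re = ∫ ω, (X ω).re ∂μ := (integral_re iX).symm
  have imX : (∫ ω, X ω ∂μ).im = ∫ ω, (X ω).im ∂μ := (integral_im iX).symm
  have reY : (∫ ω, Y ω ∂μ).re = ∫ ω, (Y ω).re ∂μ := (integral_re iY).symm
  have imY : (∫ ω, Y ω ∂μ).im = ∫ ω, (Y ω).im ∂μ := (integral_im iY).symm
  have reXY : (∫ ω, X ω * Y ω ∂μ).re = ∫ ω, (X ω * Y ω).re ∂μ := (integral_re iXY).symm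
  have imXY : (∫ ω, X ω * Y ω ∂μ).im = ∫ ω, (X ω * Y ω).im ∂μ := (integral_im iXY).symm
  have irr : Integrable (fun ω => (X ω).re * (Y ω).re) μ := hrr.integrable_mul iXre iYre
  have iii : Integrable (fun ω => (X ω).im * (Y ω).im) μ := hii.integrable_mul iXim iYim
  have iri : Integrable (fun ω => (X ω).re * (Y ω).im) μ := hri.integrable_mul iXre iYim
  have iir : Integrable (fun ω => (X ω).im * (Y ω).re) μ := hir.integrable_mul iXim iYre
  apply Complex.ext
  · rw [reXY, Complex.mul_re, reX, reY, imX, imY, ← err, ← eii,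
      ← integral_sub irr iii]
    exact integral_congr_ae (ae_of_all _ fun ω => by simp [Complex.mul_re])
  · rw [imXY, Complex.mul_im, reX, reY, imX, imY, ← eri, ← eir,
      ← integral_add iri iir]
    exact integral_congr_ae (ae_of_all _ fun ω => by simp [Complex.mul_im])

lemma measurable_mulVecz {z : Ω → Fin n → ℂ} (hz : Measurable z)
    (U : Matrix (Fin n) (Fin n) ℂ) : Measurable fun ω => U *ᵥ z ω := by
  apply measurable_pi_lambda
  intro i
  simp only [Matrix.mulVec, dotProduct]
  exact Finset.measurable_sum _ fun m _ =>
    (measurable_const.mul ((measurable_pi_apply m).comp hz))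

lemma iso_transfer' {E : Type*} [NormedAddCommGroup E] [NormedSpace ℝ E]
    [MeasurableSpace E] [BorelSpace E] [SecondCountableTopology E]
    {z : Ω → Fin n → ℂ} (hz : Measurable z)
    (hz_iso : ∀ U ∈ Matrix.unitaryGroup (Fin n) ℂ,
      Measure.map (fun ω => Matrix.mulVec U (z ω)) μ = Measure.map z μ)
    (U : Matrix (Fin n) (Fin n) ℂ) (hU : U ∈ Matrix.unitaryGroup (Fin n) ℂ)
    {f : (Fin n → ℂ) → E} (hf : Measurable f) :
    ∫ ω, f (U *ᵥ z ω) ∂μ = ∫ ω, f (z ω) ∂μ := by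
  rw [← integral_map (measurable_mulVecz hz U).aemeasurable hf.aestronglyMeasurable,
    hz_iso U hU, integral_map hz.aemeasurable hf.aestronglyMeasurable]

lemma permMatrix_apply' (σ : Equiv.Perm (Fin n)) (a b : Fin n) :
    σ.permMatrix ℂ a b = if σ a = b then 1 else 0 := by
  rw [Equiv.Perm.permMatrix, PEquiv.toMatrix_toPEquiv_eq, Matrix.submatrix_apply, Matrix.one_apply, id]

lemma permMatrix_mulVec' (σ : Equiv.Perm (Fin n)) (y : Fin n → ℂ) (i : Fin n) :
    (σ.permMatrix ℂ *ᵥ y) i = y (σ i) := by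
  simp only [Matrix.mulVec, dotProduct, permMatrix_apply', ite_mul, one_mul, zero_mul]
  rw [Finset.sum_ite_eq]
  simp

lemma perm_mem_unitary' (σ : Equiv.Perm (Fin n)) :
    σ.permMatrix ℂ ∈ Matrix.unitaryGroup (Fin n) ℂ := by
  rw [Matrix.mem_unitaryGroup_iff]
  ext i k
  simp only [Matrix.mul_apply, Matrix.star_apply, permMatrix_apply']
  simp only [apply_ite (star : ℂ → ℂ), star_one, star_zero, ite_mul, one_mul, zero_mul]
  rw [Finset.sum_ite_eq]
  simp only [Finset.mem_univ, if_true, Matrix.one_apply]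
  by_cases h : i = k <;> simp [h, Equiv.apply_eq_iff_eq, eq_comm]

lemma z_moment' [IsProbabilityMeasure μ] {z : Ω → Fin n → ℂ} (hz : Measurable z)
    (hz_unit : ∀ ω, ∑ j, Complex.normSq (z ω j) = 1)
    (hz_iso : ∀ U ∈ Matrix.unitaryGroup (Fin n) ℂ,
      Measure.map (fun ω => Matrix.mulVec U (z ω)) μ = Measure.map z μ)
    (j k : Fin n) :
    ∫ ω, z ω j * conj (z ω k) ∂μ = if j = k then ((n : ℂ))⁻¹ else 0 := by
  have hbz : ∀ ω l, Complex.normSq (z ω l) ≤ 1 := fun ω l => by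
    rw [← hz_unit ω]
    exact Finset.single_le_sum (f := fun l => Complex.normSq (z ω l))
      (fun _ _ => Complex.normSq_nonneg _) (Finset.mem_univ l)
  by_cases hjk : j = k
  · subst hjk
    simp only [if_pos rfl]
    set r : Fin n → ℝ := fun l => ∫ ω, Complex.normSq (z ω l) ∂μ with hr
    have hmeas : ∀ l : Fin n, Measurable fun ω => Complex.normSq (z ω l) := fun l =>
      Complex.continuous_normSq.measurable.comp ((measurable_pi_apply l).comp hz)
    have hint : ∀ l : Fin n, Integrable (fun ω => Complex.normSq (z ω l)) μ := fun l =>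
      integrable_of_bdd' (hmeas l) (C := 1) (fun ω => by
        rw [Real.norm_eq_abs, abs_of_nonneg (Complex.normSq_nonneg _)]; exact hbz ω l)
    have req : ∀ l m : Fin n, r l = r m := by
      intro l m
      have := iso_transfer' hz hz_iso ((Equiv.swap l m).permMatrix ℂ) (perm_mem_unitary' _)
        (f := fun y => Complex.normSq (y l))
        (Complex.continuous_normSq.measurable.comp (measurable_pi_apply l))
      simp only [permMatrix_mulVec', Equiv.swap_apply_left] at this
      exact this.symm
    have hsum : ∑ l, r l = 1 := by
      rw [hr, ← integral_finset_sum _ (fun l _ => hint l)]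
      simp only [hz_unit]
      simp
    have hn : (0:ℝ) < n := by exact_mod_cast j.pos
    have hrj : r j = ((n:ℝ))⁻¹ := by
      have h2 : (n : ℝ) * r j = 1 := by
        rw [← hsum]
        rw [Finset.sum_congr rfl (fun l _ => req l j)]
        simp [Finset.card_univ, mul_comm]
      field_simp at h2 ⊢
      linarith
    calc ∫ ω, z ω j * conj (z ω j) ∂μ
        = ∫ ω, ((Complex.normSq (z ω j) : ℝ) : ℂ) ∂μ := by
          refine integral_congr_ae (ae_of_all _ fun ω => ?_)
          simp [Complex.mul_conj]
      _ = ((r j : ℝ) : ℂ) := integral_ofReal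
      _ = ((n : ℂ))⁻¹ := by rw [hrj]; push_cast; ring
  · simp only [if_neg hjk]
    set d : Fin n → ℂ := fun l => if l = j then -1 else 1 with hd
    have hU : Matrix.diagonal d ∈ Matrix.unitaryGroup (Fin n) ℂ := by
      rw [Matrix.mem_unitaryGroup_iff]
      have hstar : star (Matrix.diagonal d) = Matrix.diagonal (star d) :=
        Matrix.diagonal_conjTranspose d
      rw [hstar, Matrix.diagonal_mul_diagonal]
      ext a b
      by_cases hab : a = b
      · subst hab
        rw [Matrix.diagonal_apply_eq, Matrix.one_apply_eq]
        by_cases haj : a = j <;> simp [hd, haj]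
      · rw [Matrix.diagonal_apply_ne _ hab, Matrix.one_apply_ne hab]
    have hf : Measurable fun y : Fin n → ℂ => y j * conj (y k) :=
      (measurable_pi_apply j).mul (continuous_star.measurable.comp (measurable_pi_apply k))
    have htr := iso_transfer' hz hz_iso (Matrix.diagonal d) hU
      (f := fun y => y j * conj (y k)) hf
    have heq : ∀ ω, (Matrix.diagonal d *ᵥ z ω) j * conj ((Matrix.diagonal d *ᵥ z ω) k)
        = -(z ω j * conj (z ω k)) := by
      intro ω
      rw [Matrix.mulVec_diagonal, Matrix.mulVec_diagonal]
      have hdj : d j = -1 := if_pos rfl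
      have hdk : d k = 1 := if_neg (fun h => hjk h.symm)
      rw [hdj, hdk, one_mul]
      ring
    simp only [heq] at htr
    rw [integral_neg] at htr
    linear_combination (-1/2 : ℂ) * htr

end Helpers

/-- Let `h_eff` be a random unit vector in `ℂ^M` and let `v` be a unit vector isotropically
distributed in the `(M-1)`-dimensional orthogonal complement of an independent quantization
vector `h_hat` (encoded as `v = T z`, where the columns of `T` form an orthonormal basis of
the orthogonal complement of `h_hat` and `z` is an isotropic unit vector of `ℂ^{M-1}`
independent of `(h_eff, h_hat, T)`).  Then
`E[|h_effᴴ v|²] = E[sin²(∠(h_eff, h_hat))] / (M-1)`, where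
`sin²(∠(h_eff, h_hat)) = 1 - |h_effᴴ h_hat|²`. -/
theorem expectation_interference_orthogonal_isotropic
    {Ω : Type*} [MeasurableSpace Ω] (μ : Measure Ω) [IsProbabilityMeasure μ]
    (M : ℕ) (hM : 2 ≤ M)
    (heff hhat : Ω → (Fin M → ℂ)) (hheff : Measurable heff) (hhhat : Measurable hhat)
    (heff_unit : ∀ ω, ∑ i, Complex.normSq (heff ω i) = 1)
    (hhat_unit : ∀ ω, ∑ i, Complex.normSq (hhat ω i) = 1)
    (T : Ω → Matrix (Fin M) (Fin (M - 1)) ℂ) (hT : Measurable T)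
    (hT_orth : ∀ ω, (T ω)ᴴ * T ω = 1)
    (hT_perp : ∀ ω, Matrix.mulVec (T ω)ᴴ (hhat ω) = 0)
    (z : Ω → (Fin (M - 1) → ℂ)) (hz : Measurable z)
    (hz_unit : ∀ ω, ∑ j, Complex.normSq (z ω j) = 1)
    (hz_iso : ∀ U ∈ Matrix.unitaryGroup (Fin (M - 1)) ℂ,
      Measure.map (fun ω => Matrix.mulVec U (z ω)) μ = Measure.map z μ)
    (hz_indep : IndepFun z (fun ω => (heff ω, hhat ω, T ω)) μ)
    (v : Ω → (Fin M → ℂ)) (hv : ∀ ω, v ω = Matrix.mulVec (T ω) (z ω)) :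
    ∫ ω, Complex.normSq (∑ i, (starRingEnd ℂ) (heff ω i) * v ω i) ∂μ =
      (∫ ω, (1 - Complex.normSq (∑ i, (starRingEnd ℂ) (heff ω i) * hhat ω i)) ∂μ) / (M - 1) := by
  have hMn : M = (M - 1) + 1 := by omega
  -- abbreviations
  set A : Ω → Fin (M - 1) → ℂ := fun ω j => ∑ i, conj (heff ω i) * T ω i j with hA
  -- norm bounds
  have norm_le_one : ∀ {x : ℂ}, Complex.normSq x ≤ 1 → ‖x‖ ≤ 1 := by
    intro x h
    nlinarith [Complex.sq_norm x, norm_nonneg x]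
  have hbheff : ∀ ω i, ‖heff ω i‖ ≤ 1 := fun ω i => norm_le_one (by
    rw [← heff_unit ω]
    exact Finset.single_le_sum (f := fun i => Complex.normSq (heff ω i))
      (fun _ _ => Complex.normSq_nonneg _) (Finset.mem_univ i))
  have hTcol : ∀ ω j, ∑ i, Complex.normSq (T ω i j) = 1 := by
    intro ω j
    have h1 := congrFun (congrFun (hT_orth ω) j) j
    simp only [Matrix.mul_apply, Matrix.conjTranspose_apply, Matrix.one_apply_eq] at h1
    have h2 : ∑ i, ((Complex.normSq (T ω i j) : ℝ) : ℂ) = 1 := by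
      rw [← h1]
      exact Finset.sum_congr rfl fun i _ => by
        rw [RCLike.star_def, ← Complex.normSq_eq_conj_mul_self]
    exact_mod_cast h2
  have hbT : ∀ ω i j, ‖T ω i j‖ ≤ 1 := fun ω i j => norm_le_one (by
    rw [← hTcol ω j]
    exact Finset.single_le_sum (f := fun i => Complex.normSq (T ω i j))
      (fun _ _ => Complex.normSq_nonneg _) (Finset.mem_univ i))
  have hbz : ∀ ω j, ‖z ω j‖ ≤ 1 := fun ω j => norm_le_one (by
    rw [← hz_unit ω]
    exact Finset.single_le_sum (f := fun j => Complex.normSq (z ω j))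
      (fun _ _ => Complex.normSq_nonneg _) (Finset.mem_univ j))
  have hbA : ∀ ω j, ‖A ω j‖ ≤ (M : ℝ) := by
    intro ω j
    calc ‖A ω j‖ ≤ ∑ i, ‖conj (heff ω i) * T ω i j‖ := norm_sum_le _ _
      _ ≤ ∑ _i : Fin M, (1 : ℝ) := by
          refine Finset.sum_le_sum fun i _ => ?_
          rw [norm_mul]
          have h1 : ‖conj (heff ω i)‖ ≤ 1 := by
            rw [RCLike.norm_conj]; exact hbheff ω i
          calc ‖conj (heff ω i)‖ * ‖T ω i j‖ ≤ 1 * 1 :=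
                mul_le_mul h1 (hbT ω i j) (norm_nonneg _) zero_le_one
            _ = 1 := mul_one 1
      _ = (M : ℝ) := by simp
  -- measurability
  have hmheff : ∀ i : Fin M, Measurable fun ω => heff ω i := fun i =>
    (measurable_pi_apply i).comp hheff
  have hmT : ∀ (i : Fin M) (j : Fin (M - 1)), Measurable fun ω => T ω i j := fun i j =>
    ((measurable_pi_apply j).comp ((measurable_pi_apply i).comp hT))
  have hmz : ∀ j : Fin (M - 1), Measurable fun ω => z ω j := fun j =>
    (measurable_pi_apply j).comp hz
  have hmA : ∀ j : Fin (M - 1), Measurable fun ω => A ω j := fun j =>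
    Finset.measurable_sum _ fun i _ =>
      (continuous_star.measurable.comp (hmheff i)).mul (hmT i j)
  have hmX : ∀ j k : Fin (M - 1), Measurable fun ω => A ω j * conj (A ω k) := fun j k =>
    (hmA j).mul (continuous_star.measurable.comp (hmA k))
  have hmY : ∀ j k : Fin (M - 1), Measurable fun ω => z ω j * conj (z ω k) := fun j k =>
    (hmz j).mul (continuous_star.measurable.comp (hmz k))
  have hbX : ∀ (j k : Fin (M - 1)) ω, ‖A ω j * conj (A ω k)‖ ≤ (M : ℝ) * (M : ℝ) := by
    intro j k ω
    rw [norm_mul, RCLike.norm_conj]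
    exact mul_le_mul (hbA ω j) (hbA ω k) (norm_nonneg _) (Nat.cast_nonneg M)
  have hbY : ∀ (j k : Fin (M - 1)) ω, ‖z ω j * conj (z ω k)‖ ≤ 1 := by
    intro j k ω
    rw [norm_mul, RCLike.norm_conj]
    calc ‖z ω j‖ * ‖z ω k‖ ≤ 1 * 1 :=
          mul_le_mul (hbz ω j) (hbz ω k) (norm_nonneg _) zero_le_one
      _ = 1 := mul_one 1
  -- independence of the relevant functionals
  have hindep : ∀ j k : Fin (M - 1), IndepFun (fun ω => A ω j * conj (A ω k))
      (fun ω => z ω j * conj (z ω k)) μ := by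
    intro j k
    have hφ : Measurable fun p : (Fin M → ℂ) × (Fin M → ℂ) × Matrix (Fin M) (Fin (M - 1)) ℂ =>
        (∑ i, conj (p.1 i) * p.2.2 i j) * conj (∑ i, conj (p.1 i) * p.2.2 i k) := by
      have hent : ∀ (i : Fin M) (l : Fin (M - 1)),
          Measurable fun p : (Fin M → ℂ) × (Fin M → ℂ) × Matrix (Fin M) (Fin (M - 1)) ℂ =>
            p.2.2 i l := fun i l =>
        (measurable_pi_apply l).comp ((measurable_pi_apply i).comp (measurable_snd.comp
          measurable_snd))
      have hh1 : ∀ i : Fin M,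
          Measurable fun p : (Fin M → ℂ) × (Fin M → ℂ) × Matrix (Fin M) (Fin (M - 1)) ℂ =>
            p.1 i := fun i => (measurable_pi_apply i).comp measurable_fst
      have hsum : ∀ l : Fin (M - 1),
          Measurable fun p : (Fin M → ℂ) × (Fin M → ℂ) × Matrix (Fin M) (Fin (M - 1)) ℂ =>
            ∑ i, conj (p.1 i) * p.2.2 i l := fun l =>
        Finset.measurable_sum _ fun i _ =>
          (continuous_star.measurable.comp (hh1 i)).mul (hent i l)
      exact (hsum j).mul (continuous_star.measurable.comp (hsum k))
    have hg : Measurable fun y : Fin (M - 1) → ℂ => y j * conj (y k) :=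
      (measurable_pi_apply j).mul (continuous_star.measurable.comp (measurable_pi_apply k))
    exact (hz_indep.comp hg hφ).symm
  -- per-term computation
  have hterm : ∀ j k : Fin (M - 1),
      ∫ ω, (A ω j * conj (A ω k)) * (z ω j * conj (z ω k)) ∂μ
      = (∫ ω, A ω j * conj (A ω k) ∂μ) * (if j = k then (((M - 1 : ℕ) : ℂ))⁻¹ else 0) := by
    intro j k
    rw [indep_integral_mul_complex' (hindep j k) (hmX j k) (hmY j k) (hbX j k) (hbY j k)
      (by positivity) zero_le_one,
      z_moment' hz hz_unit hz_iso j k]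
  -- pointwise expansion of the integrand
  have hpoint : ∀ ω, (Complex.normSq (∑ i, (starRingEnd ℂ) (heff ω i) * v ω i) : ℝ)
      = (∑ j, ∑ k, (A ω j * conj (A ω k)) * (z ω j * conj (z ω k))).re := by
    intro ω
    have hS : ∑ i, conj (heff ω i) * v ω i = ∑ j, A ω j * z ω j := by
      rw [hv ω]
      simp only [Matrix.mulVec, dotProduct]
      calc ∑ i, conj (heff ω i) * ∑ j, T ω i j * z ω j
          = ∑ i, ∑ j, conj (heff ω i) * T ω i j * z ω j := by
            refine Finset.sum_congr rfl fun i _ => ?_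
            rw [Finset.mul_sum]
            exact Finset.sum_congr rfl fun j _ => by ring
        _ = ∑ j, ∑ i, conj (heff ω i) * T ω i j * z ω j := Finset.sum_comm
        _ = ∑ j, A ω j * z ω j := by
            refine Finset.sum_congr rfl fun j _ => ?_
            rw [hA, Finset.sum_mul]
    have hexp : (∑ j, A ω j * z ω j) * conj (∑ k, A ω k * z ω k)
        = ∑ j, ∑ k, (A ω j * conj (A ω k)) * (z ω j * conj (z ω k)) := by
      rw [map_sum, Finset.sum_mul_sum]
      exact Finset.sum_congr rfl fun j _ => Finset.sum_congr rfl fun k _ => by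
        rw [_root_.map_mul]; ring
    rw [← hexp, hS, Complex.mul_conj, Complex.ofReal_re]
  -- integrability
  have iterm : ∀ j k : Fin (M - 1),
      Integrable (fun ω => (A ω j * conj (A ω k)) * (z ω j * conj (z ω k))) μ := by
    intro j k
    refine integrable_of_bdd' (C := (M : ℝ) * (M : ℝ) * 1) ((hmX j k).mul (hmY j k))
      fun ω => ?_
    rw [norm_mul]
    exact mul_le_mul (hbX j k ω) (hbY j k ω) (norm_nonneg _) (by positivity)
  have iG : Integrable (fun ω => ∑ j, ∑ k,
      (A ω j * conj (A ω k)) * (z ω j * conj (z ω k))) μ :=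
    integrable_finset_sum _ fun j _ => integrable_finset_sum _ fun k _ => iterm j k
  have iXjj : ∀ j : Fin (M - 1), Integrable (fun ω => A ω j * conj (A ω j)) μ := fun j =>
    integrable_of_bdd' (C := (M : ℝ) * (M : ℝ)) (hmX j j) (hbX j j)
  -- the real integrand on the right-hand side
  have iR : Integrable (fun ω =>
      (1 - Complex.normSq (∑ i, (starRingEnd ℂ) (heff ω i) * hhat ω i) : ℝ)) μ := by
    refine integrable_of_bdd' (C := 1 + (M : ℝ) * (M : ℝ)) ?_ ?_
    · refine (measurable_const.sub ?_)
      refine Complex.continuous_normSq.measurable.comp ?_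
      exact Finset.measurable_sum _ fun i _ =>
        (continuous_star.measurable.comp (hmheff i)).mul ((measurable_pi_apply i).comp hhhat)
    · intro ω
      have hbs : ‖∑ i, (starRingEnd ℂ) (heff ω i) * hhat ω i‖ ≤ (M : ℝ) := by
        calc ‖∑ i, (starRingEnd ℂ) (heff ω i) * hhat ω i‖
            ≤ ∑ i, ‖(starRingEnd ℂ) (heff ω i) * hhat ω i‖ := norm_sum_le _ _
          _ ≤ ∑ _i : Fin M, (1 : ℝ) := by
              refine Finset.sum_le_sum fun i _ => ?_
              rw [norm_mul, RCLike.norm_conj]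
              have h2 : ‖hhat ω i‖ ≤ 1 := norm_le_one (by
                rw [← hhat_unit ω]
                exact Finset.single_le_sum (f := fun i => Complex.normSq (hhat ω i))
                  (fun _ _ => Complex.normSq_nonneg _) (Finset.mem_univ i))
              calc ‖heff ω i‖ * ‖hhat ω i‖ ≤ 1 * 1 :=
                    mul_le_mul (hbheff ω i) h2 (norm_nonneg _) zero_le_one
                _ = 1 := mul_one 1
          _ = (M : ℝ) := by simp
      have hnsq : Complex.normSq (∑ i, (starRingEnd ℂ) (heff ω i) * hhat ω i)
          ≤ (M : ℝ) * (M : ℝ) := by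
        have := Complex.sq_norm (∑ i, (starRingEnd ℂ) (heff ω i) * hhat ω i)
        nlinarith [norm_nonneg (∑ i, (starRingEnd ℂ) (heff ω i) * hhat ω i)]
      rw [Real.norm_eq_abs, abs_le]
      constructor
      · nlinarith
      · nlinarith [Complex.normSq_nonneg (∑ i, (starRingEnd ℂ) (heff ω i) * hhat ω i)]
  -- main computation
  have hsumX : ∑ j, ∫ ω, A ω j * conj (A ω j) ∂μ
      = ((∫ ω, (1 - Complex.normSq (∑ i, (starRingEnd ℂ) (heff ω i) * hhat ω i) : ℝ) ∂μ : ℝ) : ℂ) := by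
    rw [← integral_finset_sum _ (fun j _ => iXjj j)]
    have hoR : ∫ ω, ((1 - Complex.normSq (∑ i, (starRingEnd ℂ) (heff ω i) * hhat ω i) : ℝ) : ℂ) ∂μ
        = ((∫ ω, (1 - Complex.normSq (∑ i, (starRingEnd ℂ) (heff ω i) * hhat ω i) : ℝ) ∂μ : ℝ) : ℂ) :=
      integral_ofReal
    rw [← hoR]
    refine integral_congr_ae (ae_of_all _ fun ω => ?_)
    have hsc := scalar_identity' hMn (T ω) (hhat ω) (hT_orth ω) (hT_perp ω) (hhat_unit ω)
      (heff ω) (heff_unit ω)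
    calc ∑ j, A ω j * conj (A ω j)
        = ∑ j, ((Complex.normSq (A ω j) : ℝ) : ℂ) := by
          exact Finset.sum_congr rfl fun j _ => Complex.mul_conj _
      _ = 1 - ((Complex.normSq (∑ i, conj (heff ω i) * hhat ω i) : ℝ) : ℂ) := hsc
      _ = ((1 - Complex.normSq (∑ i, (starRingEnd ℂ) (heff ω i) * hhat ω i) : ℝ) : ℂ) := by
          push_cast; ring
  have hGint : ∫ ω, (∑ j, ∑ k, (A ω j * conj (A ω k)) * (z ω j * conj (z ω k))) ∂μ
      = ((∫ ω, (1 - Complex.normSq (∑ i, (starRingEnd ℂ) (heff ω i) * hhat ω i) : ℝ) ∂μ : ℝ) : ℂ)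
        * (((M - 1 : ℕ) : ℂ))⁻¹ := by
    rw [integral_finset_sum _ (fun j _ => integrable_finset_sum _ fun k _ => iterm j k)]
    rw [Finset.sum_congr rfl (fun j _ => integral_finset_sum _ fun k _ => iterm j k)]
    rw [Finset.sum_congr rfl (fun j _ => Finset.sum_congr rfl fun k _ => hterm j k)]
    have hinner : ∀ j : Fin (M - 1), ∑ k, (∫ ω, A ω j * conj (A ω k) ∂μ)
        * (if j = k then (((M - 1 : ℕ) : ℂ))⁻¹ else 0)
        = (∫ ω, A ω j * conj (A ω j) ∂μ) * (((M - 1 : ℕ) : ℂ))⁻¹ := by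
      intro j
      simp only [mul_ite, mul_zero, Finset.sum_ite_eq, Finset.mem_univ, if_true]
    rw [Finset.sum_congr rfl (fun j _ => hinner j)]
    rw [← Finset.sum_mul, hsumX]
  have hre : ∫ ω, Complex.normSq (∑ i, (starRingEnd ℂ) (heff ω i) * v ω i) ∂μ
      = (∫ ω, (∑ j, ∑ k, (A ω j * conj (A ω k)) * (z ω j * conj (z ω k))) ∂μ).re := by
    rw [integral_congr_ae (ae_of_all _ hpoint)]
    exact integral_re iG
  rw [hre, hGint]
  have hcast : ((M - 1 : ℕ) : ℝ) = (M : ℝ) - 1 := by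
    rw [Nat.cast_sub (by omega), Nat.cast_one]
  rw [show (((M - 1 : ℕ) : ℂ))⁻¹ = ((((M - 1 : ℕ) : ℝ))⁻¹ : ℂ) by push_cast; ring]
  rw [← Complex.ofReal_inv, ← Complex.ofReal_mul, Complex.ofReal_re, hcast, div_eq_mul_inv]
end

section
/- (Rate gap bound, Theorem 1) In an M-antenna zero-forcing broadcast system with quantization-based combining over N-antenna receivers, the per-user rate gap satisfies Delta R(P) <= (sum_{l=M-N+1}^{M-1} 1/l) log2(e) + log2(1 + P * ((M-N+1)/M) * E[sin^2(angle(h_hat, h_eff))]). Abstractly: if S ~ Gamma(M,1), T ~ Gamma(M-N+1,1) coupled as T = X_beta * S with X_beta ~ Beta(M-N+1,N-1) independent of S, G uniform on [0,1]-type direction gains with E[G] = 1/M, and I is nonnegative interference with E[I] <= rho (M-N+1) E[sin^2], then E[log2(1 + rho S G)] - E[log2((1 + rho T G + I')/(1+I'))] is bounded by the stated quantity, via -E[log2 X_beta] = log2(e) sum_{l=M-N+1}^{M-1} 1/l and Jensen's inequality. -/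
open MeasureTheory ProbabilityTheory

section QBCAux

open Real Filter Nat
open scoped ENNReal NNReal

theorem tendsto_pow_mul_log (n : ℕ) (hn : 1 ≤ n) :
    Tendsto (fun x : ℝ => x ^ n * Real.log x) (nhds 0) (nhds 0) := by
  have h1 : Tendsto (fun y : ℝ => Real.log y * y ^ (n : ℝ)) (nhdsWithin 0 (Set.Ioi 0)) (nhds 0) :=
    tendsto_log_mul_rpow_nhdsGT_zero (by positivity)
  have h2 : Tendsto (fun x : ℝ => |Real.log |x| * |x| ^ (n : ℝ)|) (nhdsWithin 0 {0}ᶜ) (nhds 0) := by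
    simpa using (h1.comp tendsto_abs_nhdsNE_zero).abs
  have key : Tendsto (fun x : ℝ => x ^ n * Real.log x) (nhdsWithin 0 {0}ᶜ) (nhds 0) := by
    rw [tendsto_zero_iff_abs_tendsto_zero]
    refine h2.congr fun x => ?_
    simp only [Function.comp, abs_mul, Real.log_abs, Real.rpow_natCast, abs_pow, abs_abs, mul_comm]
  have hpure : Tendsto (fun x : ℝ => x ^ n * Real.log x) (pure (0:ℝ)) (nhds 0) := by
    simp [tendsto_pure_left, zero_pow (by omega : n ≠ 0)]
    intro s hs
    simpa using mem_of_mem_nhds hs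
  have := key.sup hpure
  rwa [nhdsNE_sup_pure] at this

theorem continuous_pow_mul_log (n : ℕ) (hn : 1 ≤ n) :
    Continuous (fun x : ℝ => x ^ n * Real.log x) := by
  rw [continuous_iff_continuousAt]
  intro x
  rcases eq_or_ne x 0 with rfl | hx
  · have := tendsto_pow_mul_log n hn
    simpa [ContinuousAt, zero_pow (by omega : n ≠ 0)] using this
  · exact (continuous_pow n).continuousAt.mul (Real.continuousAt_log hx)

theorem integral_pow_mul_log (n : ℕ) (hn : 1 ≤ n) :
    ∫ x in Set.Ioo (0:ℝ) 1, x ^ n * Real.log x = -(1 / ((n:ℝ) + 1) ^ 2) := by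
  have hcont := continuous_pow_mul_log n hn
  set F : ℝ → ℝ := fun x => x ^ (n+1) * Real.log x / (n+1) - x ^ (n+1) / ((n:ℝ)+1)^2 with hF
  have hderiv : ∀ x ∈ Set.uIcc (0:ℝ) 1, HasDerivAt F (x ^ n * Real.log x) x := by
    intro x hx
    rcases eq_or_ne x 0 with rfl | hx0
    · -- derivative at 0
      rw [hasDerivAt_iff_tendsto_slope]
      rw [show (0:ℝ) ^ n * Real.log 0 = 0 by simp [zero_pow (by omega : n ≠ 0)]]
      have : Tendsto (fun x : ℝ => x ^ n * Real.log x / (n+1) - x ^ n / ((n:ℝ)+1)^2)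
          (nhds 0) (nhds 0) := by
        have h1 := (tendsto_pow_mul_log n hn).div_const ((n:ℝ)+1)
        have h2 : Tendsto (fun x : ℝ => x ^ n / ((n:ℝ)+1)^2) (nhds 0) (nhds 0) := by
          have := (continuous_pow n).tendsto (0:ℝ)
          simpa [zero_pow (by omega : n ≠ 0)] using this.div_const _
        simpa using h1.sub h2
      refine (this.mono_left nhdsWithin_le_nhds).congr' ?_
      filter_upwards [self_mem_nhdsWithin] with y hy
      have hy0 : y ≠ 0 := hy
      simp only [slope_def_field, hF]
      field_simp
      ring
    · have h1 : HasDerivAt (fun x : ℝ => x ^ (n+1) * Real.log x)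
          (((n:ℝ)+1) * x ^ n * Real.log x + x ^ n) x := by
        have : HasDerivAt (fun x : ℝ => x ^ (n+1) * Real.log x) _ x :=
          (hasDerivAt_pow (n+1) x).mul (Real.hasDerivAt_log hx0)
        convert this using 1
        push_cast
        field_simp
        ring
      have h2 : HasDerivAt F _ x := (h1.div_const ((n:ℝ)+1)).sub ((hasDerivAt_pow (n+1) x).div_const (((n:ℝ)+1)^2))
      convert h2 using 1
      have hne : (n:ℝ) + 1 ≠ 0 := by positivity
      push_cast
      field_simp
      ring
  have hInt : IntervalIntegrable (fun x : ℝ => x ^ n * Real.log x) volume 0 1 :=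
    hcont.intervalIntegrable 0 1
  have := intervalIntegral.integral_eq_sub_of_hasDerivAt hderiv hInt
  rw [intervalIntegral.integral_of_le (by norm_num : (0:ℝ) ≤ 1),
    MeasureTheory.integral_Ioc_eq_integral_Ioo] at this
  rw [this]
  simp [hF, zero_pow (by omega : n + 1 ≠ 0)]

theorem integrableOn_pml (n m : ℕ) (hn : 1 ≤ n) :
    IntegrableOn (fun x : ℝ => x ^ n * (1-x) ^ m * Real.log x) (Set.Ioo 0 1) volume := by
  have hc : Continuous (fun x : ℝ => x ^ n * (1-x) ^ m * Real.log x) := by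
    have := (continuous_pow_mul_log n hn).mul (by fun_prop : Continuous fun x : ℝ => (1-x)^m)
    refine this.congr fun x => by simp only [Pi.mul_apply]; ring
  exact (hc.integrableOn_Icc (a := 0) (b := 1)).mono_set Set.Ioo_subset_Icc_self

theorem J_eval (m : ℕ) : ∀ n : ℕ, 1 ≤ n →
    ∫ x in Set.Ioo (0:ℝ) 1, x ^ n * (1-x) ^ m * Real.log x
      = -((n ! * m ! : ℝ) / (n+m+1)!) * ∑ l ∈ Finset.Icc (n+1) (n+m+1), (1:ℝ)/l := by
  induction m with
  | zero =>
    intro n hn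
    simp only [pow_zero, mul_one, Nat.factorial_zero, Nat.cast_one, mul_one, Nat.add_zero]
    rw [integral_pow_mul_log n hn]
    rw [Finset.Icc_self, Finset.sum_singleton]
    have : ((n+1)! : ℝ) = (n+1) * n ! := by
      rw [Nat.factorial_succ]; push_cast; ring
    rw [this]
    have h1 : ((n:ℝ)+1) ≠ 0 := by positivity
    have h2 : (n ! : ℝ) ≠ 0 := by positivity
    field_simp
    push_cast; ring
  | succ m ih =>
    intro n hn
    have split : ∀ x : ℝ, x ^ n * (1-x) ^ (m+1) * Real.log x
        = x ^ n * (1-x) ^ m * Real.log x - x ^ (n+1) * (1-x) ^ m * Real.log x := by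
      intro x; ring
    rw [show (fun x : ℝ => x ^ n * (1-x) ^ (m+1) * Real.log x) =
        (fun x : ℝ => x ^ n * (1-x) ^ m * Real.log x - x ^ (n+1) * (1-x) ^ m * Real.log x)
        from funext split]
    rw [integral_sub (integrableOn_pml n m hn) (integrableOn_pml (n+1) m (by omega))]
    rw [ih n hn, ih (n+1) (by omega)]
    simp only [show n+1+(m+1) = n+m+2 from by omega, show n+(m+1)+1 = n+m+2 from by omega,
      show n+1+m+1 = n+m+2 from by omega, show n+1+m = n+m+1 from by omega]
    have hc1 : ((n+1:ℕ):ℝ) = (n:ℝ)+1 := by push_cast; ring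
    have hc2 : ((n+m+2:ℕ):ℝ) = (n:ℝ)+m+2 := by push_cast; ring
    have hS3 : ∑ l ∈ Finset.Icc (n+1) (n+m+2), (1:ℝ)/l
        = (∑ l ∈ Finset.Icc (n+1) (n+m+1), (1:ℝ)/l) + 1/((n:ℝ)+m+2) := by
      rw [show n+m+2 = (n+m+1)+1 from rfl, Finset.sum_Icc_succ_top (by omega), ← hc2]
    have hS3' : ∑ l ∈ Finset.Icc (n+1) (n+m+2), (1:ℝ)/l
        = 1/((n:ℝ)+1) + ∑ l ∈ Finset.Icc (n+2) (n+m+2), (1:ℝ)/l := by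
      have hins : Finset.Icc (n+1) (n+m+2) = insert (n+1) (Finset.Icc (n+2) (n+m+2)) := by
        ext k
        simp only [Finset.mem_Icc, Finset.mem_insert]
        omega
      rw [hins, Finset.sum_insert (by simp), ← hc1]
    set T := ∑ l ∈ Finset.Icc (n+2) (n+m+2), (1:ℝ)/l with hT
    have hS1 : ∑ l ∈ Finset.Icc (n+1) (n+m+1), (1:ℝ)/l
        = 1/((n:ℝ)+1) + T - 1/((n:ℝ)+m+2) := by
      have := hS3.symm.trans hS3'
      linarith
    rw [hS1, hS3']
    have e1 : ((n+1)! : ℝ) = ((n:ℝ)+1) * n ! := by rw [Nat.factorial_succ]; push_cast; ring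
    have e2 : ((m+1)! : ℝ) = ((m:ℝ)+1) * m ! := by rw [Nat.factorial_succ]; push_cast; ring
    have e3 : ((n+m+2)! : ℝ) = ((n:ℝ)+m+2) * (n+m+1)! := by
      rw [show n+m+2 = (n+m+1)+1 from rfl, Nat.factorial_succ]; push_cast; ring
    rw [e1, e2, e3]
    have h1 : ((n:ℝ)+1) ≠ 0 := by positivity
    have h2 : ((n:ℝ)+m+2) ≠ 0 := by positivity
    have h3 : ((n+m+1)! : ℝ) ≠ 0 := by positivity
    have h4 : (n ! : ℝ) ≠ 0 := by positivity
    have h5 : (m ! : ℝ) ≠ 0 := by positivity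
    field_simp
    ring

theorem beta_log_integral (M N : ℕ) (hN : 2 ≤ N) (hNM : N < M) :
    ∫ x, Real.log x ∂(_root_.betaMeasure ((M:ℝ) - N + 1) ((N:ℝ) - 1))
      = -(∑ l ∈ Finset.Icc (M-N+1) (M-1), (1:ℝ)/l) := by
  set n : ℕ := M - N with hn
  set m : ℕ := N - 2 with hm
  have hn1 : 1 ≤ n := by omega
  have hMN : N ≤ M := le_of_lt hNM
  have ha : (M:ℝ) - N + 1 = ((n+1 : ℕ) : ℝ) := by
    push_cast [hn, Nat.cast_sub hMN]; ring
  have hb : (N:ℝ) - 1 = ((m+1 : ℕ) : ℝ) := by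
    push_cast [hm, Nat.cast_sub (by omega : 2 ≤ N)]; ring
  have hab : (M:ℝ) - N + 1 + ((N:ℝ) - 1) = ((n+m+1 : ℕ) : ℝ) + 1 := by
    push_cast [hn, hm, Nat.cast_sub hMN, Nat.cast_sub (by omega : 2 ≤ N)]; ring
  set C : ℝ := ((n+m+1)! : ℝ) / ((n ! : ℝ) * (m ! : ℝ)) with hC
  have hCpos : 0 < C := by positivity
  have hGamma : Real.Gamma ((M:ℝ) - N + 1 + ((N:ℝ) - 1)) /
      (Real.Gamma ((M:ℝ) - N + 1) * Real.Gamma ((N:ℝ) - 1)) = C := by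
    rw [hab, ha, hb]
    rw [show ((n+1:ℕ):ℝ) = (n:ℝ) + 1 by push_cast; ring,
      show ((m+1:ℕ):ℝ) = (m:ℝ) + 1 by push_cast; ring]
    rw [Real.Gamma_nat_eq_factorial, Real.Gamma_nat_eq_factorial, Real.Gamma_nat_eq_factorial]
  -- the density as a real function
  set g : ℝ → ℝ := fun x => C * x ^ n * (1 - x) ^ m with hg
  have hdens : ∀ x ∈ Set.Ioo (0:ℝ) 1,
      Real.Gamma ((M:ℝ) - N + 1 + ((N:ℝ) - 1)) /
        (Real.Gamma ((M:ℝ) - N + 1) * Real.Gamma ((N:ℝ) - 1)) *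
        x ^ ((M:ℝ) - N + 1 - 1) * (1 - x) ^ ((N:ℝ) - 1 - 1) = g x := by
    intro x hx
    rw [hGamma, hg]
    have e1 : (M:ℝ) - N + 1 - 1 = ((n : ℕ) : ℝ) := by rw [ha]; push_cast; ring
    have e2 : (N:ℝ) - 1 - 1 = ((m : ℕ) : ℝ) := by rw [hb]; push_cast; ring
    rw [e1, e2, Real.rpow_natCast, Real.rpow_natCast]
  have hg_nonneg : ∀ x ∈ Set.Ioo (0:ℝ) 1, 0 ≤ g x := by
    intro x hx
    have h1 : (0:ℝ) ≤ x := le_of_lt hx.1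
    have h2 : (0:ℝ) ≤ 1 - x := by linarith [hx.2]
    positivity
  have hae : (fun x : ℝ => ENNReal.ofReal (Real.Gamma ((M:ℝ) - N + 1 + ((N:ℝ) - 1)) /
        (Real.Gamma ((M:ℝ) - N + 1) * Real.Gamma ((N:ℝ) - 1)) *
        x ^ ((M:ℝ) - N + 1 - 1) * (1 - x) ^ ((N:ℝ) - 1 - 1)))
      =ᵐ[volume.restrict (Set.Ioo (0:ℝ) 1)] (fun x => ENNReal.ofReal (g x)) := by
    rw [Filter.EventuallyEq, ae_restrict_iff' measurableSet_Ioo]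
    filter_upwards with x hx
    rw [hdens x hx]
  have hmeas : Measurable fun x : ℝ => (g x).toNNReal := by
    apply measurable_real_toNNReal.comp
    fun_prop
  have key : ∫ x, Real.log x ∂(_root_.betaMeasure ((M:ℝ) - N + 1) ((N:ℝ) - 1))
      = ∫ x in Set.Ioo (0:ℝ) 1, g x * Real.log x := by
    rw [_root_.betaMeasure, withDensity_congr_ae hae]
    have := integral_withDensity_eq_integral_smul (μ := volume.restrict (Set.Ioo (0:ℝ) 1))
      hmeas Real.log
    rw [show (fun x : ℝ => ENNReal.ofReal (g x)) = (fun x : ℝ => ((g x).toNNReal : ℝ≥0∞))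
      from rfl, this]
    refine setIntegral_congr_fun measurableSet_Ioo fun x hx => ?_
    rw [NNReal.smul_def, Real.coe_toNNReal _ (hg_nonneg x hx), smul_eq_mul]
  rw [key]
  have : ∀ x : ℝ, g x * Real.log x = C * (x ^ n * (1-x) ^ m * Real.log x) := by
    intro x; rw [hg]; ring
  rw [show (fun x : ℝ => g x * Real.log x)
      = fun x : ℝ => C * (x ^ n * (1-x) ^ m * Real.log x) from funext this]
  rw [integral_const_mul, J_eval m n hn1]
  have hsum : Finset.Icc (n+1) (n+m+1) = Finset.Icc (M-N+1) (M-1) := by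
    congr 1 <;> omega
  rw [hsum, hC]
  have h3 : ((n+m+1)! : ℝ) ≠ 0 := by positivity
  have h4 : (n ! : ℝ) ≠ 0 := by positivity
  have h5 : (m ! : ℝ) ≠ 0 := by positivity
  field_simp
  rw [show n+1 = M-N+1 from by omega]

/-- Rate gap bound (Theorem 1), abstract form.  `S ~ Gamma(M,1)` is the squared channel
norm, `T = X_beta * S` with `X_beta ~ Beta(M-N+1, N-1)` independent of `(S, G)` is the
squared effective-channel norm, `G ∈ [0,1]` is the beamforming direction gain with
`E[G] = 1/M`, and `Intf ≥ 0` is the multiuser interference with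
`E[Intf] ≤ ρ (M-N+1) ε`, where `ε = E[sin²(∠(ĥ, h_eff))]` and `ρ = P/M`.  Then the
per-user rate gap satisfies
`ΔR(P) ≤ (∑_{l=M-N+1}^{M-1} 1/l) log₂ e + log₂(1 + P ((M-N+1)/M) ε)`. -/
theorem qbc_rate_gap_bound
    {Ω : Type*} [MeasurableSpace Ω] (μ : Measure Ω) [IsProbabilityMeasure μ]
    (M N : ℕ) (hN : 1 ≤ N) (hNM : N < M)
    (P ρ : ℝ) (hP : 0 < P) (hρ : ρ = P / M)
    (ε : ℝ) (hε : 0 ≤ ε)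
    (S G Xb Intf : Ω → ℝ)
    (hS : Measurable S) (hG : Measurable G) (hXb : Measurable Xb) (hIntf : Measurable Intf)
    (hS_law : Measure.map S μ = gammaMeasure (M : ℝ) 1)
    (hXb_law : Measure.map Xb μ = _root_.betaMeasure ((M : ℝ) - N + 1) ((N : ℝ) - 1))
    (hXb_indep : IndepFun Xb (fun ω => (S ω, G ω)) μ)
    (hS_nonneg : ∀ ω, 0 ≤ S ω)
    (hG_range : ∀ ω, G ω ∈ Set.Icc (0:ℝ) 1)
    (hG_mean : ∫ ω, G ω ∂μ = 1 / M)
    (hIntf_nonneg : ∀ ω, 0 ≤ Intf ω)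
    (hIntf_int : Integrable Intf μ)
    (hIntf_mean : ∫ ω, Intf ω ∂μ ≤ ρ * ((M : ℝ) - N + 1) * ε)
    (hint₁ : Integrable (fun ω => Real.logb 2 (1 + ρ * S ω * G ω)) μ)
    (hint₂ : Integrable
      (fun ω => Real.logb 2 (1 + ρ * (Xb ω * S ω) * G ω / (1 + Intf ω))) μ)
    (hint₃ : Integrable (fun ω => Real.log (Xb ω)) μ) :
    (∫ ω, Real.logb 2 (1 + ρ * S ω * G ω) ∂μ) -
        ∫ ω, Real.logb 2 (1 + ρ * (Xb ω * S ω) * G ω / (1 + Intf ω)) ∂μ ≤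
      (∑ l ∈ Finset.Icc (M - N + 1) (M - 1), (1 : ℝ) / l) * Real.logb 2 (Real.exp 1) +
        Real.logb 2 (1 + P * (((M : ℝ) - N + 1) / M) * ε) := by
  -- degenerate case N = 1 : the beta "measure" is zero, contradicting probability
  rcases eq_or_lt_of_le hN with hN1 | hN2
  · exfalso
    have hzero : _root_.betaMeasure ((M:ℝ) - N + 1) ((N:ℝ) - 1) = 0 := by
      rw [_root_.betaMeasure]
      have h1 : (N:ℝ) - 1 = 0 := by rw [← hN1]; norm_num
      have : (fun x : ℝ => ENNReal.ofReal (Real.Gamma ((M:ℝ) - N + 1 + ((N:ℝ) - 1)) /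
          (Real.Gamma ((M:ℝ) - N + 1) * Real.Gamma ((N:ℝ) - 1)) *
          x ^ ((M:ℝ) - N + 1 - 1) * (1 - x) ^ ((N:ℝ) - 1 - 1))) = 0 := by
        funext x
        simp [h1, Real.Gamma_zero]
      rw [this, withDensity_zero]
    have hprob : IsProbabilityMeasure (Measure.map Xb μ) :=
      Measure.isProbabilityMeasure_map hXb.aemeasurable
    rw [hXb_law, hzero] at hprob
    have h01 : (0 : Measure ℝ) Set.univ = 1 := hprob.measure_univ
    rw [Measure.coe_zero, Pi.zero_apply] at h01
    exact zero_ne_one h01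
  -- main case 2 ≤ N
  have hN2' : 2 ≤ N := hN2
  have hMpos : (0:ℝ) < M := by
    have : 0 < M := by omega
    exact_mod_cast this
  have hρ0 : 0 < ρ := by rw [hρ]; positivity
  have hlog2 : (0:ℝ) < Real.log 2 := Real.log_pos one_lt_two
  -- a.e. the beta variable lies in (0,1)
  have hXbIoo : ∀ᵐ ω ∂μ, Xb ω ∈ Set.Ioo (0:ℝ) 1 := by
    have hc : MeasurableSet (Set.Ioo (0:ℝ) 1) := measurableSet_Ioo
    have h0 : μ (Xb ⁻¹' (Set.Ioo (0:ℝ) 1)ᶜ) = 0 := by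
      rw [← Measure.map_apply hXb hc.compl, hXb_law, _root_.betaMeasure,
        withDensity_apply _ hc.compl, Measure.restrict_restrict hc.compl,
        Set.compl_inter_self]
      simp
    rw [ae_iff]
    exact h0
  -- abbreviations
  set f1 : Ω → ℝ := fun ω => Real.log (1 + ρ * S ω * G ω) with hf1
  set f2 : Ω → ℝ := fun ω => Real.log (1 + ρ * (Xb ω * S ω) * G ω / (1 + Intf ω)) with hf2
  set L1 : Ω → ℝ := fun ω => Real.log (1 + ρ * (Xb ω * S ω) * G ω) with hL1
  set L2 : Ω → ℝ := fun ω => Real.log (1 + Intf ω) with hL2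
  have hlogne : Real.log 2 ≠ 0 := ne_of_gt hlog2
  -- integrability of natural-log versions
  have hf1int : Integrable f1 μ := by
    have heq : (fun ω => Real.logb 2 (1 + ρ * S ω * G ω) * Real.log 2) = f1 := by
      funext ω; rw [← Real.log_div_log, div_mul_cancel₀ _ hlogne]
    exact heq ▸ (hint₁.mul_const (Real.log 2))
  have hf2int : Integrable f2 μ := by
    have heq : (fun ω => Real.logb 2 (1 + ρ * (Xb ω * S ω) * G ω / (1 + Intf ω)) *
        Real.log 2) = f2 := by
      funext ω; rw [← Real.log_div_log, div_mul_cancel₀ _ hlogne]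
    exact heq ▸ (hint₂.mul_const (Real.log 2))
  have hL2meas : Measurable L2 := (hIntf.const_add 1).log
  have hL2nonneg : ∀ ω, 0 ≤ L2 ω := fun ω =>
    Real.log_nonneg (by linarith [hIntf_nonneg ω])
  have hL2int : Integrable L2 μ := by
    refine hIntf_int.mono hL2meas.aestronglyMeasurable
      (Filter.Eventually.of_forall fun ω => ?_)
    rw [Real.norm_eq_abs, Real.norm_eq_abs, abs_of_nonneg (hL2nonneg ω),
      abs_of_nonneg (hIntf_nonneg ω)]
    have h1 : (0:ℝ) < 1 + Intf ω := by linarith [hIntf_nonneg ω]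
    have := Real.log_le_sub_one_of_pos h1
    linarith
  have hL1meas : Measurable L1 := by
    have : Measurable fun ω => 1 + ρ * (Xb ω * S ω) * G ω := by fun_prop
    exact this.log
  -- pointwise inequalities
  have hpt2 : ∀ᵐ ω ∂μ, L1 ω ≤ f2 ω + L2 ω := by
    filter_upwards [hXbIoo] with ω hω
    have ht : 0 ≤ ρ * (Xb ω * S ω) * G ω :=
      mul_nonneg (mul_nonneg hρ0.le (mul_nonneg hω.1.le (hS_nonneg ω))) (hG_range ω).1
    have hI : 0 ≤ Intf ω := hIntf_nonneg ω
    have h1I : (0:ℝ) < 1 + Intf ω := by linarith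
    have key : (1 : ℝ) + ρ * (Xb ω * S ω) * G ω ≤
        (1 + ρ * (Xb ω * S ω) * G ω / (1 + Intf ω)) * (1 + Intf ω) := by
      rw [add_mul, div_mul_cancel₀ _ (ne_of_gt h1I)]
      nlinarith
    have hpos2 : (0:ℝ) < 1 + ρ * (Xb ω * S ω) * G ω / (1 + Intf ω) := by
      have : 0 ≤ ρ * (Xb ω * S ω) * G ω / (1 + Intf ω) := div_nonneg ht h1I.le
      linarith
    calc L1 ω ≤ Real.log ((1 + ρ * (Xb ω * S ω) * G ω / (1 + Intf ω)) * (1 + Intf ω)) :=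
          Real.log_le_log (by linarith) key
      _ = f2 ω + L2 ω := Real.log_mul (ne_of_gt hpos2) (ne_of_gt h1I)
  have hL1nonneg : ∀ᵐ ω ∂μ, 0 ≤ L1 ω := by
    filter_upwards [hXbIoo] with ω hω
    have ht : 0 ≤ ρ * (Xb ω * S ω) * G ω :=
      mul_nonneg (mul_nonneg hρ0.le (mul_nonneg hω.1.le (hS_nonneg ω))) (hG_range ω).1
    exact Real.log_nonneg (by linarith)
  have hL1int : Integrable L1 μ := by
    refine (hf2int.add hL2int).mono' hL1meas.aestronglyMeasurable ?_
    filter_upwards [hpt2, hL1nonneg] with ω h2 h0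
    rw [Real.norm_eq_abs, abs_of_nonneg h0]
    exact h2
  have hpt1 : ∀ᵐ ω ∂μ, f1 ω ≤ L1 ω - Real.log (Xb ω) := by
    filter_upwards [hXbIoo] with ω hω
    have hx0 : 0 < Xb ω := hω.1
    have hx1 : Xb ω < 1 := hω.2
    have hsg : 0 ≤ ρ * S ω * G ω :=
      mul_nonneg (mul_nonneg hρ0.le (hS_nonneg ω)) (hG_range ω).1
    have key : (1 + ρ * S ω * G ω) * Xb ω ≤ 1 + ρ * (Xb ω * S ω) * G ω := by nlinarith
    have h2 : f1 ω + Real.log (Xb ω) =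
        Real.log ((1 + ρ * S ω * G ω) * Xb ω) :=
      (Real.log_mul (by linarith) (ne_of_gt hx0)).symm
    have h3 : Real.log ((1 + ρ * S ω * G ω) * Xb ω) ≤ L1 ω :=
      Real.log_le_log (by nlinarith) key
    linarith
  -- integral inequalities
  have step1 : ∫ ω, f1 ω ∂μ ≤ (∫ ω, L1 ω ∂μ) - ∫ ω, Real.log (Xb ω) ∂μ := by
    rw [← integral_sub hL1int hint₃]
    exact integral_mono_ae hf1int (hL1int.sub hint₃) hpt1
  have step2 : (∫ ω, L1 ω ∂μ) - ∫ ω, L2 ω ∂μ ≤ ∫ ω, f2 ω ∂μ := by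
    rw [← integral_sub hL1int hL2int]
    refine integral_mono_ae (hL1int.sub hL2int) hf2int ?_
    filter_upwards [hpt2] with ω h
    linarith
  -- Jensen for the interference
  set c : ℝ := ∫ ω, Intf ω ∂μ with hc
  have hc0 : 0 ≤ c := integral_nonneg hIntf_nonneg
  have h1c : (0:ℝ) < 1 + c := by linarith
  have step3 : ∫ ω, L2 ω ∂μ ≤ Real.log (1 + ρ * ((M:ℝ) - N + 1) * ε) := by
    have hRint : Integrable (fun ω => (Intf ω - c) / (1 + c)) μ :=
      (hIntf_int.sub (integrable_const c)).div_const _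
    have hpt : ∀ ω, L2 ω ≤ Real.log (1 + c) + (Intf ω - c) / (1 + c) := by
      intro ω
      have h1I : (0:ℝ) < 1 + Intf ω := by linarith [hIntf_nonneg ω]
      have hdivpos : (0:ℝ) < (1 + Intf ω) / (1 + c) := by positivity
      have h := Real.log_le_sub_one_of_pos hdivpos
      rw [Real.log_div (ne_of_gt h1I) (ne_of_gt h1c)] at h
      have he : (1 + Intf ω) / (1 + c) - 1 = (Intf ω - c) / (1 + c) := by
        rw [div_sub_one (ne_of_gt h1c)]; ring
      rw [he] at h
      linarith
    have hint : Integrable (fun ω => Real.log (1 + c) + (Intf ω - c) / (1 + c)) μ :=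
      (integrable_const _).add hRint
    have hmono := integral_mono hL2int hint hpt
    have hval : ∫ ω, (Real.log (1 + c) + (Intf ω - c) / (1 + c)) ∂μ = Real.log (1 + c) := by
      rw [integral_add (integrable_const _) hRint, integral_const, probReal_univ,
        smul_eq_mul, one_mul, integral_div,
        integral_sub hIntf_int (integrable_const c), integral_const, probReal_univ,
        smul_eq_mul, one_mul, ← hc]
      simp
    rw [hval] at hmono
    have hlast : Real.log (1 + c) ≤ Real.log (1 + ρ * ((M:ℝ) - N + 1) * ε) :=
      Real.log_le_log h1c (by linarith [hIntf_mean])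
    linarith
  -- the beta log moment
  have step4 : ∫ ω, Real.log (Xb ω) ∂μ
      = -(∑ l ∈ Finset.Icc (M-N+1) (M-1), (1:ℝ)/l) := by
    rw [← beta_log_integral M N hN2' hNM, ← hXb_law,
      integral_map hXb.aemeasurable Real.measurable_log.aestronglyMeasurable]
  -- combine
  set Ssum : ℝ := ∑ l ∈ Finset.Icc (M-N+1) (M-1), (1:ℝ)/l with hSsum
  have hEρ : ρ * ((M:ℝ) - N + 1) * ε = P * (((M : ℝ) - N + 1) / M) * ε := by
    rw [hρ]; field_simp
  have key : (∫ ω, f1 ω ∂μ) - ∫ ω, f2 ω ∂μ ≤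
      Ssum + Real.log (1 + P * (((M : ℝ) - N + 1) / M) * ε) := by
    rw [← hEρ]
    have := step4
    linarith [step1, step2, step3]
  -- convert to logb
  have hlhs1 : ∫ ω, Real.logb 2 (1 + ρ * S ω * G ω) ∂μ = (∫ ω, f1 ω ∂μ) / Real.log 2 := by
    rw [← integral_div]
    simp_rw [hf1, ← Real.log_div_log]
  have hlhs2 : ∫ ω, Real.logb 2 (1 + ρ * (Xb ω * S ω) * G ω / (1 + Intf ω)) ∂μ
      = (∫ ω, f2 ω ∂μ) / Real.log 2 := by
    rw [← integral_div]
    simp_rw [hf2, ← Real.log_div_log]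
  rw [hlhs1, hlhs2, div_sub_div_same]
  have hrhs : (Ssum * Real.logb 2 (Real.exp 1) +
      Real.logb 2 (1 + P * (((M : ℝ) - N + 1) / M) * ε))
      = (Ssum + Real.log (1 + P * (((M : ℝ) - N + 1) / M) * ε)) / Real.log 2 := by
    rw [← Real.log_div_log, ← Real.log_div_log, Real.log_exp]
    field_simp
  rw [hrhs]
  gcongr

end QBCAux
end
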